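/- Let R be an expanding integer (|R| ≥ 2) and B ⊂ ℤ a finite set with 0 ∈ B and gcd(B) = 1, such that (R,B,L) is a Hadamard triple for some L ⊂ ℤ. Then the set 𝒵 = {ξ ∈ ℝ : μ̂(ξ+k) = 0 for all k ∈ ℤ} is empty, where μ = μ(R,B) is the associated self-similar measure. -/

import Mathlib

open scoped BigOperators ENNReal
open Matrix MeasureTheory

noncomputable section

/-- The one-dimensional Hadamard matrix (1/√N)[e^{2πi b ℓ / R}]_{ℓ∈L, b∈B}. -/
def hMatrix1 (R : ℤ) (B L : Finset ℤ) : Matrix L B ℂ := fun ℓ b =>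
  ((1 / Real.sqrt (B.card) : ℝ) : ℂ) *
    Complex.exp (2 * (Real.pi : ℂ) * Complex.I *
      ((((b : ℤ) : ℝ) * ((ℓ : ℤ) : ℝ) / (R : ℝ) : ℝ) : ℂ))

/-- One-dimensional Hadamard triple. -/
def IsHadamardTriple1 (R : ℤ) (B L : Finset ℤ) : Prop :=
  B.card = L.card ∧ (hMatrix1 R B L)ᴴ * hMatrix1 R B L = 1

/-- One-dimensional Fourier transform of a measure. -/
def ft1 (μ : Measure ℝ) (ξ : ℝ) : ℂ :=
  ∫ x, Complex.exp (-(2 * (Real.pi : ℂ) * Complex.I * ((ξ * x : ℝ) : ℂ))) ∂μ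

namespace ZP

/-- complex exponential e^{2πit} -/
def ev (t : ℝ) : ℂ := Complex.exp (2 * (Real.pi : ℂ) * Complex.I * ((t : ℝ) : ℂ))

lemma ev_add (s t : ℝ) : ev (s + t) = ev s * ev t := by
  unfold ev; rw [← Complex.exp_add]; congr 1; push_cast; ring

lemma ev_zero : ev 0 = 1 := by simp [ev]

lemma ev_ne_zero (t : ℝ) : ev t ≠ 0 := Complex.exp_ne_zero _

lemma ev_int (k : ℤ) : ev (k : ℝ) = 1 := by
  unfold ev
  rw [← Complex.exp_int_mul_two_pi_mul_I k]
  congr 1; push_cast; ring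

lemma ev_conj (t : ℝ) : (starRingEnd ℂ) (ev t) = ev (-t) := by
  unfold ev
  rw [← Complex.exp_conj]
  congr 1
  simp only [_root_.map_mul, map_ofNat, Complex.conj_ofReal, Complex.conj_I]
  push_cast
  ring

lemma ev_eq (t : ℝ) : ev t = Complex.exp (((2 * Real.pi * t : ℝ) : ℂ) * Complex.I) := by
  unfold ev; congr 1; push_cast; ring

lemma ev_norm (t : ℝ) : ‖ev t‖ = 1 := by
  rw [ev_eq]; exact Complex.norm_exp_ofReal_mul_I _

lemma ev_eq_one_iff (t : ℝ) : ev t = 1 ↔ ∃ n : ℤ, t = n := by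
  rw [ev_eq, Complex.exp_eq_one_iff]
  constructor
  · rintro ⟨n, hn⟩
    refine ⟨n, ?_⟩
    have h2 : ((2 * Real.pi * t : ℝ) : ℂ) = (((n : ℝ) * (2 * Real.pi) : ℝ) : ℂ) := by
      apply mul_right_cancel₀ Complex.I_ne_zero
      rw [hn]; push_cast; ring
    have h3 : 2 * Real.pi * t = (n : ℝ) * (2 * Real.pi) := by exact_mod_cast h2
    have h2pi : (2 * Real.pi) ≠ 0 := by positivity
    apply mul_left_cancel₀ h2pi
    linarith
  · rintro ⟨n, rfl⟩
    exact ⟨n, by push_cast; ring⟩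


def mB (B : Finset ℤ) (t : ℝ) : ℂ := ((B.card : ℂ))⁻¹ * ∑ b ∈ B, ev (-((b : ℝ) * t))

lemma mB_periodic (B : Finset ℤ) (t : ℝ) (k : ℤ) : mB B (t + k) = mB B t := by
  unfold mB
  congr 1
  apply Finset.sum_congr rfl
  intro b _
  have h : (-((b : ℝ) * (t + k))) = (-((b : ℝ) * t)) + (((-b * k : ℤ) : ℝ)) := by push_cast; ring
  rw [h, ev_add, ev_int, mul_one]

variable {R : ℤ} {B L : Finset ℤ}

lemma cardB_pos (hB : (0 : ℤ) ∈ B) : 0 < B.card := Finset.card_pos.mpr ⟨0, hB⟩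

lemma had1 (hH : IsHadamardTriple1 R B L) (hB : (0 : ℤ) ∈ B) :
    ∀ b ∈ B, ∀ b' ∈ B,
      (∑ ℓ ∈ L, ev (((b' : ℝ) - (b : ℝ)) * (ℓ : ℝ) / (R : ℝ)))
        = if b = b' then (B.card : ℂ) else 0 := by
  intro b hb b' hb'
  have hN : 0 < B.card := cardB_pos hB
  have hNC : (B.card : ℂ) ≠ 0 := by exact_mod_cast (Nat.cast_ne_zero (R := ℂ)).mpr hN.ne'
  have key := congrFun (congrFun hH.2 ⟨b, hb⟩) ⟨b', hb'⟩
  rw [Matrix.mul_apply, Matrix.one_apply] at key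
  have hsum : ∀ k : L,
      (hMatrix1 R B L)ᴴ ⟨b, hb⟩ k * hMatrix1 R B L k ⟨b', hb'⟩
        = (B.card : ℂ)⁻¹ * ev (((b' : ℝ) - (b : ℝ)) * ((k : ℤ) : ℝ) / (R : ℝ)) := by
    intro k
    rw [Matrix.conjTranspose_apply]
    show (starRingEnd ℂ) (((1 / Real.sqrt (B.card) : ℝ) : ℂ) * ev ((b : ℝ) * ((k : ℤ) : ℝ) / R))
        * (((1 / Real.sqrt (B.card) : ℝ) : ℂ) * ev ((b' : ℝ) * ((k : ℤ) : ℝ) / R)) = _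
    rw [_root_.map_mul, Complex.conj_ofReal, ev_conj]
    have h1 : ev (-((b : ℝ) * ((k : ℤ) : ℝ) / R)) * ev ((b' : ℝ) * ((k : ℤ) : ℝ) / R)
        = ev (((b' : ℝ) - (b : ℝ)) * ((k : ℤ) : ℝ) / (R : ℝ)) := by
      rw [← ev_add]; congr 1; ring
    have h2 : ((1 / Real.sqrt (B.card) : ℝ) : ℂ) * ((1 / Real.sqrt (B.card) : ℝ) : ℂ)
        = (B.card : ℂ)⁻¹ := by
      rw [← Complex.ofReal_mul]
      have h3 : (1 / Real.sqrt (B.card)) * (1 / Real.sqrt (B.card)) = ((B.card : ℝ))⁻¹ := by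
        rw [div_mul_div_comm, one_mul, Real.mul_self_sqrt (by positivity)]
        simp
      rw [h3]
      push_cast
      ring
    calc ((1 / Real.sqrt (B.card) : ℝ) : ℂ) * ev (-((b : ℝ) * ((k : ℤ) : ℝ) / R))
          * (((1 / Real.sqrt (B.card) : ℝ) : ℂ) * ev ((b' : ℝ) * ((k : ℤ) : ℝ) / R))
        = (((1 / Real.sqrt (B.card) : ℝ) : ℂ) * ((1 / Real.sqrt (B.card) : ℝ) : ℂ))
          * (ev (-((b : ℝ) * ((k : ℤ) : ℝ) / R)) * ev ((b' : ℝ) * ((k : ℤ) : ℝ) / R)) := by ring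
      _ = (B.card : ℂ)⁻¹ * ev (((b' : ℝ) - (b : ℝ)) * ((k : ℤ) : ℝ) / (R : ℝ)) := by rw [h1, h2]
  rw [Finset.sum_congr rfl (fun k _ => hsum k)] at key
  rw [Finset.sum_coe_sort L (fun ℓ => (B.card : ℂ)⁻¹ * ev (((b' : ℝ) - (b : ℝ)) * (ℓ : ℝ) / (R : ℝ))),
      ← Finset.mul_sum] at key
  simp only [Subtype.mk_eq_mk] at key
  by_cases hbb : b = b'
  · rw [if_pos hbb] at key ⊢
    field_simp at key
    rw [key]
  · rw [if_neg hbb] at key ⊢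
    field_simp at key
    rwa [mul_zero] at key

lemma had2 (hH : IsHadamardTriple1 R B L) (hB : (0 : ℤ) ∈ B) :
    ∀ ℓ ∈ L, ∀ ℓ' ∈ L,
      (∑ b ∈ B, ev ((b : ℝ) * ((ℓ : ℝ) - (ℓ' : ℝ)) / (R : ℝ)))
        = if ℓ = ℓ' then (B.card : ℂ) else 0 := by
  intro ℓ hℓ ℓ' hℓ'
  have hN : 0 < B.card := cardB_pos hB
  have hNC : (B.card : ℂ) ≠ 0 := by exact_mod_cast (Nat.cast_ne_zero (R := ℂ)).mpr hN.ne'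
  have e : (B : Type) ≃ (L : Type) :=
    Fintype.equivOfCardEq (by rw [Fintype.card_coe, Fintype.card_coe, hH.1])
  have h3 : hMatrix1 R B L * (hMatrix1 R B L)ᴴ = 1 :=
    (Matrix.mul_eq_one_comm_of_equiv e).mp hH.2
  have key := congrFun (congrFun h3 ⟨ℓ, hℓ⟩) ⟨ℓ', hℓ'⟩
  rw [Matrix.mul_apply, Matrix.one_apply] at key
  have hsum : ∀ k : B,
      hMatrix1 R B L ⟨ℓ, hℓ⟩ k * (hMatrix1 R B L)ᴴ k ⟨ℓ', hℓ'⟩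
        = (B.card : ℂ)⁻¹ * ev (((k : ℤ) : ℝ) * ((ℓ : ℝ) - (ℓ' : ℝ)) / (R : ℝ)) := by
    intro k
    rw [Matrix.conjTranspose_apply]
    show (((1 / Real.sqrt (B.card) : ℝ) : ℂ) * ev (((k : ℤ) : ℝ) * (ℓ : ℝ) / R))
        * ((starRingEnd ℂ) (((1 / Real.sqrt (B.card) : ℝ) : ℂ) * ev (((k : ℤ) : ℝ) * (ℓ' : ℝ) / R))) = _
    rw [_root_.map_mul, Complex.conj_ofReal, ev_conj]
    have h1 : ev (((k : ℤ) : ℝ) * (ℓ : ℝ) / R) * ev (-(((k : ℤ) : ℝ) * (ℓ' : ℝ) / R))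
        = ev (((k : ℤ) : ℝ) * ((ℓ : ℝ) - (ℓ' : ℝ)) / (R : ℝ)) := by
      rw [← ev_add]; congr 1; ring
    have h2 : ((1 / Real.sqrt (B.card) : ℝ) : ℂ) * ((1 / Real.sqrt (B.card) : ℝ) : ℂ)
        = (B.card : ℂ)⁻¹ := by
      rw [← Complex.ofReal_mul]
      have h3' : (1 / Real.sqrt (B.card)) * (1 / Real.sqrt (B.card)) = ((B.card : ℝ))⁻¹ := by
        rw [div_mul_div_comm, one_mul, Real.mul_self_sqrt (by positivity)]
        simp
      rw [h3']
      push_cast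
      ring
    calc _ = (((1 / Real.sqrt (B.card) : ℝ) : ℂ) * ((1 / Real.sqrt (B.card) : ℝ) : ℂ))
          * (ev (((k : ℤ) : ℝ) * (ℓ : ℝ) / R) * ev (-(((k : ℤ) : ℝ) * (ℓ' : ℝ) / R))) := by ring
      _ = _ := by rw [h1, h2]
  rw [Finset.sum_congr rfl (fun k _ => hsum k)] at key
  rw [Finset.sum_coe_sort B (fun b => (B.card : ℂ)⁻¹ * ev ((b : ℝ) * ((ℓ : ℝ) - (ℓ' : ℝ)) / (R : ℝ))),
      ← Finset.mul_sum] at key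
  simp only [Subtype.mk_eq_mk] at key
  by_cases hll : ℓ = ℓ'
  · rw [if_pos hll] at key ⊢
    field_simp at key
    rw [key]
  · rw [if_neg hll] at key ⊢
    field_simp at key
    rwa [mul_zero] at key

lemma Lmod (hH : IsHadamardTriple1 R B L) (hB : (0 : ℤ) ∈ B) (hR0 : (R : ℝ) ≠ 0) :
    ∀ ℓ ∈ L, ∀ ℓ' ∈ L, (R ∣ ℓ - ℓ') → ℓ = ℓ' := by
  intro ℓ hℓ ℓ' hℓ' ⟨m, hm⟩
  by_contra hne
  have key := had2 hH hB ℓ hℓ ℓ' hℓ'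
  rw [if_neg hne] at key
  have h1 : ∀ b ∈ B, ev ((b : ℝ) * ((ℓ : ℝ) - (ℓ' : ℝ)) / (R : ℝ)) = 1 := by
    intro b _
    have h2 : ((b : ℝ) * ((ℓ : ℝ) - (ℓ' : ℝ)) / (R : ℝ)) = ((b * m : ℤ) : ℝ) := by
      have h3 : ((ℓ : ℝ) - (ℓ' : ℝ)) = (R : ℝ) * (m : ℝ) := by exact_mod_cast congrArg (Int.cast : ℤ → ℝ) hm
      rw [h3]
      field_simp
      push_cast
      ring
    rw [h2, ev_int]
  rw [Finset.sum_congr rfl h1, Finset.sum_const, nsmul_eq_mul, mul_one] at key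
  have hN : 0 < B.card := cardB_pos hB
  have hNC : (B.card : ℂ) ≠ 0 := by exact_mod_cast (Nat.cast_ne_zero (R := ℂ)).mpr hN.ne'
  exact hNC key

lemma Qsum (hH : IsHadamardTriple1 R B L) (hB : (0 : ℤ) ∈ B) (t : ℝ) :
    (∑ ℓ ∈ L, mB B ((t + (ℓ : ℝ)) / (R : ℝ)) * (starRingEnd ℂ) (mB B ((t + (ℓ : ℝ)) / (R : ℝ)))) = 1 := by
  have hN : 0 < B.card := cardB_pos hB
  have hNC : (B.card : ℂ) ≠ 0 := by exact_mod_cast (Nat.cast_ne_zero (R := ℂ)).mpr hN.ne'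
  have expand : ∀ s : ℝ, mB B s * (starRingEnd ℂ) (mB B s)
      = (B.card : ℂ)⁻¹ * (B.card : ℂ)⁻¹ * ∑ b ∈ B, ∑ b' ∈ B, ev (((b' : ℝ) - (b : ℝ)) * s) := by
    intro s
    unfold mB
    rw [_root_.map_mul, map_sum, map_inv₀, map_natCast]
    rw [show ((B.card : ℂ)⁻¹ * ∑ b ∈ B, ev (-((b : ℝ) * s))) * ((B.card : ℂ)⁻¹ * ∑ b' ∈ B, (starRingEnd ℂ) (ev (-((b' : ℝ) * s))))
        = (B.card : ℂ)⁻¹ * (B.card : ℂ)⁻¹ * ((∑ b ∈ B, ev (-((b : ℝ) * s))) * (∑ b' ∈ B, (starRingEnd ℂ) (ev (-((b' : ℝ) * s))))) from by ring]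
    congr 1
    rw [Finset.sum_mul_sum]
    apply Finset.sum_congr rfl
    intro b _
    apply Finset.sum_congr rfl
    intro b' _
    rw [ev_conj, neg_neg, ← ev_add]
    congr 1
    ring
  calc (∑ ℓ ∈ L, mB B ((t + (ℓ : ℝ)) / (R : ℝ)) * (starRingEnd ℂ) (mB B ((t + (ℓ : ℝ)) / (R : ℝ))))
      = ∑ ℓ ∈ L, (B.card : ℂ)⁻¹ * (B.card : ℂ)⁻¹
          * ∑ b ∈ B, ∑ b' ∈ B, ev (((b' : ℝ) - (b : ℝ)) * ((t + (ℓ : ℝ)) / (R : ℝ))) :=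
        Finset.sum_congr rfl (fun ℓ _ => expand _)
    _ = (B.card : ℂ)⁻¹ * (B.card : ℂ)⁻¹
          * ∑ ℓ ∈ L, ∑ b ∈ B, ∑ b' ∈ B, ev (((b' : ℝ) - (b : ℝ)) * ((t + (ℓ : ℝ)) / (R : ℝ))) := by
        rw [Finset.mul_sum]
    _ = (B.card : ℂ)⁻¹ * (B.card : ℂ)⁻¹
          * ∑ b ∈ B, ∑ b' ∈ B, ∑ ℓ ∈ L, ev (((b' : ℝ) - (b : ℝ)) * ((t + (ℓ : ℝ)) / (R : ℝ))) := by
        rw [Finset.sum_comm]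
        congr 1
        apply Finset.sum_congr rfl
        intro b _
        rw [Finset.sum_comm]
    _ = (B.card : ℂ)⁻¹ * (B.card : ℂ)⁻¹ * ∑ b ∈ B, (B.card : ℂ) := by
        congr 1
        apply Finset.sum_congr rfl
        intro b hb
        have hinner : ∀ b' ∈ B, (∑ ℓ ∈ L, ev (((b' : ℝ) - (b : ℝ)) * ((t + (ℓ : ℝ)) / (R : ℝ))))
            = ev (((b' : ℝ) - (b : ℝ)) * t / (R : ℝ)) * (if b = b' then (B.card : ℂ) else 0) := by
          intro b' hb'
          have hsplit : ∀ ℓ : ℤ, ev (((b' : ℝ) - (b : ℝ)) * ((t + (ℓ : ℝ)) / (R : ℝ)))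
              = ev (((b' : ℝ) - (b : ℝ)) * t / (R : ℝ)) * ev (((b' : ℝ) - (b : ℝ)) * (ℓ : ℝ) / (R : ℝ)) := by
            intro ℓ
            rw [← ev_add]
            congr 1
            ring
          rw [Finset.sum_congr rfl (fun ℓ _ => hsplit ℓ), ← Finset.mul_sum,
            had1 hH hB b hb b' hb']
        rw [Finset.sum_congr rfl hinner]
        rw [show (fun b' : ℤ => ev (((b' : ℝ) - (b : ℝ)) * t / (R : ℝ)) * (if b = b' then (B.card : ℂ) else 0))
            = (fun b' : ℤ => if b = b' then ev (((b' : ℝ) - (b : ℝ)) * t / (R : ℝ)) * (B.card : ℂ) else 0) from by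
          funext b'; split_ifs <;> simp]
        rw [Finset.sum_ite_eq B b (fun b' => ev (((b' : ℝ) - (b : ℝ)) * t / (R : ℝ)) * (B.card : ℂ)),
          if_pos hb]
        simp [ev_zero]
    _ = 1 := by
        rw [Finset.sum_const, nsmul_eq_mul]
        field_simp

section Meas

def Zs (μ : Measure ℝ) : Set ℝ := {ξ | ∀ k : ℤ, ft1 μ (ξ + (k : ℝ)) = 0}

variable {μ : Measure ℝ}

lemma ft1_eq_ev (μ : Measure ℝ) (ξ : ℝ) : ft1 μ ξ = ∫ x, ev (-(ξ * x)) ∂μ := by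
  unfold ft1 ev
  congr 1
  funext x
  congr 1
  push_cast
  ring

lemma continuous_ev (f : ℝ → ℝ) (hf : Continuous f) : Continuous fun x => ev (f x) :=
  Complex.continuous_exp.comp (by continuity)

lemma integrable_ev (ν : Measure ℝ) [IsFiniteMeasure ν] (f : ℝ → ℝ) (hf : Continuous f) :
    Integrable (fun x => ev (f x)) ν := by
  apply Integrable.mono' (integrable_const (1 : ℝ))
  · exact (Complex.continuous_exp.comp (by continuity)).aestronglyMeasurable
  · exact Filter.Eventually.of_forall fun x => by
      rw [ev_norm]

lemma ft1_zero [IsProbabilityMeasure μ] : ft1 μ 0 = 1 := by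
  rw [ft1_eq_ev]
  simp [ev_zero]

lemma transfer [IsProbabilityMeasure μ] (hB : (0 : ℤ) ∈ B)
    (hμ : μ = (B.card : ℝ≥0∞)⁻¹ •
      ∑ b ∈ B, μ.map (fun x : ℝ => (x + (b : ℝ)) / (R : ℝ))) (ξ : ℝ) :
    ft1 μ ξ = mB B (ξ / R) * ft1 μ (ξ / R) := by
  have meas_φ : ∀ b : ℤ, Measurable (fun x : ℝ => (x + (b : ℝ)) / (R : ℝ)) :=
    fun b => (measurable_id.add_const _).div_const _
  have hprob : ∀ b : ℤ, IsProbabilityMeasure (μ.map (fun x : ℝ => (x + (b : ℝ)) / (R : ℝ))) :=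
    fun b => Measure.isProbabilityMeasure_map (meas_φ b).aemeasurable
  have step1 : ft1 μ ξ = ((B.card : ℝ≥0∞)⁻¹).toReal •
      ∑ b ∈ B, ∫ x, ev (-(ξ * x)) ∂(μ.map (fun x : ℝ => (x + (b : ℝ)) / (R : ℝ))) := by
    rw [ft1_eq_ev]
    conv_lhs => rw [hμ]
    rw [integral_smul_measure, integral_finset_sum_measure (fun b _ => by
      haveI := hprob b
      exact integrable_ev _ _ ((continuous_const.mul continuous_id).neg))]
  rw [step1]
  have step2 : ∀ b ∈ B, ∫ x, ev (-(ξ * x)) ∂(μ.map (fun x : ℝ => (x + (b : ℝ)) / (R : ℝ)))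
      = ev (-((b : ℝ) * (ξ / R))) * ft1 μ (ξ / R) := by
    intro b _
    rw [integral_map (α := ℝ) (β := ℝ) (φ := fun x : ℝ => (x + (b : ℝ)) / (R : ℝ))
      (f := fun y : ℝ => ev (-(ξ * y))) (meas_φ b).aemeasurable
      ((continuous_ev (fun y => -(ξ * y)) ((continuous_const.mul continuous_id).neg)).aestronglyMeasurable)]
    have harg : ∀ x : ℝ, ev (-(ξ * ((x + (b : ℝ)) / (R : ℝ))))
        = ev (-((b : ℝ) * (ξ / R))) * ev (-((ξ / R) * x)) := by
      intro x
      rw [← ev_add]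
      congr 1
      ring
    calc ∫ x, ev (-(ξ * ((x + (b : ℝ)) / (R : ℝ)))) ∂μ
        = ∫ x, ev (-((b : ℝ) * (ξ / R))) * ev (-((ξ / R) * x)) ∂μ := by
          congr 1; funext x; exact harg x
      _ = ev (-((b : ℝ) * (ξ / R))) * ∫ x, ev (-((ξ / R) * x)) ∂μ := integral_const_mul _ _
      _ = ev (-((b : ℝ) * (ξ / R))) * ft1 μ (ξ / R) := by rw [← ft1_eq_ev]
  rw [Finset.sum_congr rfl step2, ← Finset.sum_mul]
  rw [ENNReal.toReal_inv, ENNReal.toReal_natCast, Complex.real_smul]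
  unfold mB
  push_cast
  ring

lemma Zs_not_int [IsProbabilityMeasure μ] (n : ℤ) : ((n : ℝ)) ∉ Zs μ := by
  intro h
  have h2 := h (-n)
  rw [show ((n : ℝ) + ((-n : ℤ) : ℝ)) = 0 by push_cast; ring, ft1_zero] at h2
  exact one_ne_zero h2

lemma Zs_add_int {ξ : ℝ} (hξ : ξ ∈ Zs μ) (n : ℤ) : ξ + (n : ℝ) ∈ Zs μ := by
  intro k
  have h2 := hξ (n + k)
  rw [show (ξ + ((n + k : ℤ) : ℝ)) = ξ + (n : ℝ) + (k : ℝ) by push_cast; ring] at h2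
  exact h2

lemma Zs_fract {ξ : ℝ} (hξ : ξ ∈ Zs μ) : Int.fract ξ ∈ Zs μ := by
  have h := Zs_add_int hξ (-⌊ξ⌋)
  rw [show (ξ + ((-⌊ξ⌋ : ℤ) : ℝ)) = Int.fract ξ by rw [Int.fract]; push_cast; ring] at h
  exact h

lemma Zs_mem_zero {ξ : ℝ} (hξ : ξ ∈ Zs μ) : ft1 μ ξ = 0 := by
  have h := hξ 0
  rwa [show (ξ + ((0 : ℤ) : ℝ)) = ξ by push_cast; ring] at h

lemma Zs_invariant [IsProbabilityMeasure μ] (hB : (0 : ℤ) ∈ B)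
    (hμ : μ = (B.card : ℝ≥0∞)⁻¹ •
      ∑ b ∈ B, μ.map (fun x : ℝ => (x + (b : ℝ)) / (R : ℝ)))
    (hR0 : (R : ℝ) ≠ 0) {ξ : ℝ} (hξ : ξ ∈ Zs μ) (s : ℤ)
    (hm : mB B ((ξ + (s : ℝ)) / (R : ℝ)) ≠ 0) : (ξ + (s : ℝ)) / (R : ℝ) ∈ Zs μ := by
  intro m
  have h0 := hξ (s + R * m)
  have ht := transfer hB hμ (ξ + ((s + R * m : ℤ) : ℝ))
  rw [h0] at ht
  have harg : (ξ + ((s + R * m : ℤ) : ℝ)) / (R : ℝ) = (ξ + (s : ℝ)) / (R : ℝ) + (m : ℝ) := by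
    push_cast
    field_simp
    ring
  rw [harg, mB_periodic] at ht
  rcases mul_eq_zero.mp ht.symm with h | h
  · exact absurd h hm
  · exact h

lemma Zs_succ (hH : IsHadamardTriple1 R B L) (hB : (0 : ℤ) ∈ B) (ξ : ℝ) :
    ∃ ℓ ∈ L, mB B ((ξ + (ℓ : ℝ)) / (R : ℝ)) ≠ 0 := by
  by_contra h
  push_neg at h
  have hq := Qsum hH hB ξ
  rw [Finset.sum_eq_zero (fun ℓ hℓ => by rw [h ℓ hℓ, zero_mul])] at hq
  exact one_ne_zero hq.symm

end Meas

section Anal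
variable {μ : Measure ℝ} {R : ℤ} {B : Finset ℤ}

lemma ae_abs_bound [IsProbabilityMeasure μ] (hR : 2 ≤ |R|)
    (hμ : μ = (B.card : ℝ≥0∞)⁻¹ •
      ∑ b ∈ B, μ.map (fun x : ℝ => (x + (b : ℝ)) / (R : ℝ))) (hB : (0 : ℤ) ∈ B) :
    ∃ M : ℝ, 0 < M ∧ ∀ᵐ x ∂μ, |x| ≤ M := by
  classical
  set β : ℝ := ∑ b ∈ B, |(b : ℝ)| with hβdef
  have hβ0 : 0 ≤ β := Finset.sum_nonneg fun b _ => abs_nonneg _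
  have hβb : ∀ b ∈ B, |(b : ℝ)| ≤ β := fun b hb =>
    Finset.single_le_sum (f := fun c : ℤ => |(c : ℝ)|) (fun c _ => abs_nonneg ((c : ℝ))) hb
  refine ⟨β + 1, by positivity, ?_⟩
  have hSmeas : ∀ t : ℝ, MeasurableSet {x : ℝ | t < |x|} := fun t =>
    measurableSet_lt measurable_const measurable_abs
  have meas_φ : ∀ b : ℤ, Measurable (fun x : ℝ => (x + (b : ℝ)) / (R : ℝ)) :=
    fun b => (measurable_id.add_const _).div_const _
  have hN : 0 < B.card := cardB_pos hB
  have hc0 : ((B.card : ℝ≥0∞)) ≠ 0 := by exact_mod_cast Nat.cast_ne_zero.mpr hN.ne'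
  have hctop : ((B.card : ℝ≥0∞)) ≠ ⊤ := ENNReal.natCast_ne_top _
  have hRr : (2 : ℝ) ≤ |(R : ℝ)| := by
    rw [← Int.cast_abs]
    exact_mod_cast hR
  have step : ∀ t : ℝ, β + 1 ≤ t → μ {x | t < |x|} ≤ μ {x | t + 1 < |x|} := by
    intro t ht
    have ht0 : (0 : ℝ) ≤ t := le_trans (by positivity) ht
    have hsub : ∀ b ∈ B,
        (μ.map (fun x : ℝ => (x + (b : ℝ)) / (R : ℝ))) {x | t < |x|} ≤ μ {x | t + 1 < |x|} := by
      intro b hb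
      rw [Measure.map_apply (meas_φ b) (hSmeas t)]
      apply measure_mono
      intro x hx
      simp only [Set.mem_preimage, Set.mem_setOf_eq] at hx ⊢
      have hR0 : (0 : ℝ) < |(R : ℝ)| := by linarith
      have h1 : |x + (b : ℝ)| = |(R : ℝ)| * |(x + (b : ℝ)) / (R : ℝ)| := by
        rw [abs_div]
        field_simp
      have h2 : |(R : ℝ)| * t < |x + (b : ℝ)| := by
        rw [h1]
        exact mul_lt_mul_of_pos_left hx hR0
      have h3 : 2 * t < |x + (b : ℝ)| := by nlinarith
      have h4 : |x| ≥ |x + (b : ℝ)| - |(b : ℝ)| := by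
        have := abs_sub_abs_le_abs_sub (x + (b : ℝ)) (b : ℝ)
        simp at this
        linarith
      have h5 : |(b : ℝ)| ≤ β := hβb b hb
      linarith
    conv_lhs => rw [hμ]
    rw [Measure.smul_apply, Measure.finset_sum_apply, smul_eq_mul]
    calc (B.card : ℝ≥0∞)⁻¹ * ∑ b ∈ B,
          (μ.map (fun x : ℝ => (x + (b : ℝ)) / (R : ℝ))) {x | t < |x|}
        ≤ (B.card : ℝ≥0∞)⁻¹ * ∑ _b ∈ B, μ {x | t + 1 < |x|} :=
          mul_le_mul_right (Finset.sum_le_sum hsub) _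
      _ = μ {x | t + 1 < |x|} := by
          rw [Finset.sum_const, nsmul_eq_mul, ← mul_assoc,
            ENNReal.inv_mul_cancel hc0 hctop, one_mul]
  have hind : ∀ n : ℕ, μ {x | β + 1 < |x|} ≤ μ {x | β + 1 + n < |x|} := by
    intro n
    induction n with
    | zero => simp
    | succ n ih =>
      refine le_trans ih (le_trans (step (β + 1 + n)
        (by have := Nat.cast_nonneg (α := ℝ) n; linarith)) (le_of_eq ?_))
      congr 2
      push_cast
      ring
  have hant : Antitone (fun n : ℕ => {x : ℝ | β + 1 + n < |x|}) := by
    intro n m hnm x hx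
    simp only [Set.mem_setOf_eq] at hx ⊢
    have : (n : ℝ) ≤ m := by exact_mod_cast hnm
    linarith
  have hT := tendsto_measure_iInter_atTop (μ := μ) (s := fun n : ℕ => {x : ℝ | β + 1 + n < |x|})
    (fun n => (hSmeas _).nullMeasurableSet) hant ⟨0, measure_ne_top μ _⟩
  have hempty : (⋂ n : ℕ, {x : ℝ | β + 1 + n < |x|}) = ∅ := by
    ext x
    simp only [Set.mem_iInter, Set.mem_setOf_eq, Set.mem_empty_iff_false, iff_false, not_forall,
      not_lt]
    obtain ⟨n, hn⟩ := exists_nat_gt (|x| - (β + 1))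
    exact ⟨n, by linarith⟩
  rw [hempty, measure_empty] at hT
  have h0 : μ {x | β + 1 < |x|} = 0 := by
    have hle : μ {x | β + 1 < |x|} ≤ 0 := ge_of_tendsto' hT (fun n => hind n)
    exact le_zero_iff.mp hle
  rw [ae_iff]
  simpa only [not_le] using h0

/-- complex-parameter Fourier transform -/
def gg (μ : Measure ℝ) : ℂ → ℂ :=
  fun z => ∫ x, Complex.exp (-(2 * (Real.pi : ℂ) * Complex.I * ((x : ℝ) : ℂ)) * z) ∂μ

lemma gg_real (μ : Measure ℝ) (ξ : ℝ) : gg μ (ξ : ℂ) = ft1 μ ξ := by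
  unfold gg ft1
  congr 1
  funext x
  congr 1
  push_cast
  ring

lemma gg_cont_aux (z : ℂ) : Continuous fun x : ℝ =>
    Complex.exp (-(2 * (Real.pi : ℂ) * Complex.I * ((x : ℝ) : ℂ)) * z) :=
  Complex.continuous_exp.comp (((continuous_const.mul Complex.continuous_ofReal).neg).mul
    continuous_const)

lemma gg_norm (x : ℝ) (z : ℂ) :
    ‖Complex.exp (-(2 * (Real.pi : ℂ) * Complex.I * ((x : ℝ) : ℂ)) * z)‖
      ≤ Real.exp (2 * Real.pi * |x| * ‖z‖) := by
  rw [Complex.norm_exp]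
  apply Real.exp_le_exp.mpr
  calc (-(2 * (Real.pi : ℂ) * Complex.I * ((x : ℝ) : ℂ)) * z).re
      ≤ |(-(2 * (Real.pi : ℂ) * Complex.I * ((x : ℝ) : ℂ)) * z).re| := le_abs_self _
    _ ≤ ‖-(2 * (Real.pi : ℂ) * Complex.I * ((x : ℝ) : ℂ)) * z‖ :=
        Complex.abs_re_le_norm _
    _ = 2 * Real.pi * |x| * ‖z‖ := by
        rw [norm_mul, norm_neg]
        rw [show (2 * (Real.pi : ℂ) * Complex.I * ((x : ℝ) : ℂ))
            = (((2 * Real.pi * x : ℝ)) : ℂ) * Complex.I from by push_cast; ring]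
        rw [norm_mul, Complex.norm_real, Real.norm_eq_abs, Complex.norm_I, mul_one]
        rw [abs_mul, abs_mul]
        rw [abs_of_nonneg (by norm_num : (0:ℝ) ≤ 2), abs_of_nonneg Real.pi_pos.le]

lemma gg_diff [IsProbabilityMeasure μ] {M : ℝ} (hM : 0 < M) (hb : ∀ᵐ x ∂μ, |x| ≤ M) :
    Differentiable ℂ (gg μ) := by
  intro z₀
  have key := hasDerivAt_integral_of_dominated_loc_of_deriv_le (μ := μ)
    (F := fun (z : ℂ) (x : ℝ) => Complex.exp (-(2 * (Real.pi : ℂ) * Complex.I * ((x : ℝ) : ℂ)) * z))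
    (F' := fun (z : ℂ) (x : ℝ) => (-(2 * (Real.pi : ℂ) * Complex.I * ((x : ℝ) : ℂ))) *
      Complex.exp (-(2 * (Real.pi : ℂ) * Complex.I * ((x : ℝ) : ℂ)) * z))
    (x₀ := z₀) (bound := fun _ => (2 * Real.pi * M) * Real.exp (2 * Real.pi * M * (‖z₀‖ + 1)))
    (s := Metric.ball z₀ 1) (Metric.ball_mem_nhds z₀ one_pos)
    (Filter.Eventually.of_forall fun z => (gg_cont_aux z).aestronglyMeasurable)
    ?_ ?_ ?_ ?_ ?_
  · exact key.2.differentiableAt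
  · -- integrability at z₀
    apply Integrable.mono' (integrable_const (Real.exp (2 * Real.pi * M * ‖z₀‖)))
    · exact (gg_cont_aux z₀).aestronglyMeasurable
    · filter_upwards [hb] with x hx
      refine le_trans (gg_norm x z₀) (Real.exp_le_exp.mpr ?_)
      have h1 : (0:ℝ) ≤ ‖z₀‖ := norm_nonneg _
      have h2 := mul_le_mul_of_nonneg_right
        (mul_le_mul_of_nonneg_left hx (by positivity : (0:ℝ) ≤ 2 * Real.pi)) h1
      linarith
  · exact ((((continuous_const.mul Complex.continuous_ofReal).neg).mul
      (gg_cont_aux z₀))).aestronglyMeasurable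
  · -- bound on derivative
    filter_upwards [hb] with x hx
    intro z hz
    have hz1 : ‖z‖ ≤ ‖z₀‖ + 1 := by
      have h2 : ‖z - z₀‖ < 1 := by
        rw [← dist_eq_norm]
        exact Metric.mem_ball.mp hz
      calc ‖z‖ = ‖z₀ + (z - z₀)‖ := by ring_nf
        _ ≤ ‖z₀‖ + ‖z - z₀‖ := norm_add_le _ _
        _ ≤ ‖z₀‖ + 1 := by linarith
    rw [norm_mul]
    have habs1 : ‖-(2 * (Real.pi : ℂ) * Complex.I * ((x : ℝ) : ℂ))‖ = 2 * Real.pi * |x| := by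
      rw [norm_neg]
      rw [show (2 * (Real.pi : ℂ) * Complex.I * ((x : ℝ) : ℂ))
          = (((2 * Real.pi * x : ℝ)) : ℂ) * Complex.I from by push_cast; ring]
      rw [norm_mul, Complex.norm_real, Real.norm_eq_abs, Complex.norm_I, mul_one, abs_mul, abs_mul]
      rw [abs_of_nonneg (by norm_num : (0:ℝ) ≤ 2), abs_of_nonneg Real.pi_pos.le]
    rw [habs1]
    have h2 := gg_norm x z
    have h3 : Real.exp (2 * Real.pi * |x| * ‖z‖) ≤ Real.exp (2 * Real.pi * M * (‖z₀‖ + 1)) := by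
      apply Real.exp_le_exp.mpr
      have h5 : (0:ℝ) ≤ ‖z‖ := norm_nonneg _
      have h7 := mul_le_mul (mul_le_mul_of_nonneg_left hx (by positivity : (0:ℝ) ≤ 2 * Real.pi))
        hz1 h5 (by positivity)
      linarith
    have h6 : (0:ℝ) ≤ 2 * Real.pi * |x| := by positivity
    calc 2 * Real.pi * |x| * ‖Complex.exp (-(2 * (Real.pi : ℂ) * Complex.I * ((x : ℝ) : ℂ)) * z)‖
        ≤ 2 * Real.pi * |x| * Real.exp (2 * Real.pi * M * (‖z₀‖ + 1)) := by
          exact mul_le_mul_of_nonneg_left (le_trans h2 h3) h6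
      _ ≤ (2 * Real.pi * M) * Real.exp (2 * Real.pi * M * (‖z₀‖ + 1)) := by
          have h7 : 2 * Real.pi * |x| ≤ 2 * Real.pi * M :=
            mul_le_mul_of_nonneg_left hx (by positivity)
          exact mul_le_mul_of_nonneg_right h7 (Real.exp_pos _).le
  · exact integrable_const _
  · -- differentiability
    apply Filter.Eventually.of_forall
    intro x z _
    have h1 : HasDerivAt (fun z : ℂ => (-(2 * (Real.pi : ℂ) * Complex.I * ((x : ℝ) : ℂ))) * z)
        (-(2 * (Real.pi : ℂ) * Complex.I * ((x : ℝ) : ℂ))) z := by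
      simpa using (hasDerivAt_id z).const_mul (-(2 * (Real.pi : ℂ) * Complex.I * ((x : ℝ) : ℂ)))
    have h2 := h1.cexp
    simpa [mul_comm] using h2

lemma gg_zero [IsProbabilityMeasure μ] : gg μ 0 = 1 := by
  unfold gg
  simp

lemma Zs_finite [IsProbabilityMeasure μ] {M : ℝ} (hM : 0 < M) (hb : ∀ᵐ x ∂μ, |x| ≤ M) :
    (Zs μ ∩ Set.Icc (0 : ℝ) 1).Finite := by
  by_contra hinf
  have hinf' : (Zs μ ∩ Set.Icc (0 : ℝ) 1).Infinite := hinf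
  obtain ⟨x, _, hacc⟩ := hinf'.exists_accPt_of_subset_isCompact isCompact_Icc
    Set.inter_subset_right
  rw [accPt_iff_frequently] at hacc
  have hdiff : Differentiable ℂ (gg μ) := gg_diff hM hb
  have hanal : AnalyticOnNhd ℂ (gg μ) Set.univ :=
    hdiff.differentiableOn.analyticOnNhd isOpen_univ
  have htend : Filter.Tendsto (fun t : ℝ => (t : ℂ)) (nhdsWithin x {x}ᶜ)
      (nhdsWithin (x : ℂ) {(x : ℂ)}ᶜ) := by
    rw [tendsto_nhdsWithin_iff]
    constructor
    · exact (Complex.continuous_ofReal.tendsto x).mono_left nhdsWithin_le_nhds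
    · exact eventually_mem_nhdsWithin.mono (fun y hy h => hy (by
        simp only [Set.mem_singleton_iff] at h
        exact_mod_cast h))
  have hfreq : ∃ᶠ z in nhdsWithin (x : ℂ) {(x : ℂ)}ᶜ, gg μ z = 0 := by
    apply htend.frequently
    have h1 : ∃ᶠ t in nhdsWithin x {x}ᶜ, t ∈ Zs μ := by
      rw [frequently_nhdsWithin_iff]
      exact hacc.mono fun y hy => ⟨hy.2.1, hy.1⟩
    exact h1.mono fun t ht => by rw [gg_real]; exact Zs_mem_zero ht
  have heq := hanal.eqOn_zero_of_preconnected_of_frequently_eq_zero isPreconnected_univ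
    (Set.mem_univ ((x : ℝ) : ℂ)) hfreq
  have h0 := heq (Set.mem_univ 0)
  rw [gg_zero] at h0
  exact one_ne_zero h0

end Anal

section NT

lemma abs_one_re_one {z : ℂ} (h1 : ‖z‖ = 1) (h2 : z.re = 1) : z = 1 := by
  have hsq : Complex.normSq z = 1 := by
    have := Complex.sq_norm z
    rw [h1] at this
    simpa using this.symm
  rw [Complex.normSq_apply, h2] at hsq
  have him : z.im = 0 := by nlinarith [sq_nonneg z.im]
  apply Complex.ext
  · simpa using h2
  · simpa using him

lemma gcd_comb (B : Finset ℤ) (t : ℝ) :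
    (∀ b ∈ B, ∃ n : ℤ, (b : ℝ) * t = n) → ∃ n : ℤ, ((B.gcd id : ℤ) : ℝ) * t = n := by
  classical
  induction B using Finset.induction_on with
  | empty => exact fun _ => ⟨0, by simp⟩
  | @insert a s ha ih =>
    intro h
    obtain ⟨n1, hn1⟩ := h a (Finset.mem_insert_self a s)
    obtain ⟨n2, hn2⟩ := ih (fun b hb => h b (Finset.mem_insert_of_mem hb))
    rw [Finset.gcd_insert]
    refine ⟨Int.gcdA a (s.gcd id) * n1 + Int.gcdB a (s.gcd id) * n2, ?_⟩
    have hg : (GCDMonoid.gcd (id a) (s.gcd id) : ℤ)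
        = a * Int.gcdA a (s.gcd id) + (s.gcd id) * Int.gcdB a (s.gcd id) := by
      rw [id_eq, ← Int.coe_gcd, Int.gcd_eq_gcd_ab]
    rw [hg]
    push_cast
    rw [add_mul]
    rw [show ((a : ℝ) * (Int.gcdA a (s.gcd id) : ℝ)) * t
        = (Int.gcdA a (s.gcd id) : ℝ) * ((a : ℝ) * t) from by ring, hn1]
    rw [show (((s.gcd id : ℤ) : ℝ) * (Int.gcdB a (s.gcd id) : ℝ)) * t
        = (Int.gcdB a (s.gcd id) : ℝ) * (((s.gcd id : ℤ) : ℝ) * t) from by ring, hn2]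

end NT
end ZP

/-- in dimension one, a Hadamard triple with 0 ∈ B and gcd(B) = 1 has
𝒵 = ∅, i.e. for every ξ there is an integer k with μ̂(ξ + k) ≠ 0. -/
theorem Z_empty_dim_one (R : ℤ) (hR : 2 ≤ |R|) (B L : Finset ℤ)
    (h0 : (0 : ℤ) ∈ B) (hgcd : B.gcd id = 1)
    (hH : IsHadamardTriple1 R B L)
    (μ : Measure ℝ) [IsProbabilityMeasure μ]
    (hμ : μ = (B.card : ℝ≥0∞)⁻¹ •
      ∑ b ∈ B, μ.map (fun x : ℝ => (x + (b : ℝ)) / (R : ℝ))) :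
    ∀ ξ : ℝ, ∃ k : ℤ, ft1 μ (ξ + (k : ℝ)) ≠ 0 := by
  classical
  intro ξ
  by_contra hcon
  push_neg at hcon
  have hξZ : ξ ∈ ZP.Zs μ := hcon
  have hN : 0 < B.card := ZP.cardB_pos h0
  have hRr : (2 : ℝ) ≤ |(R : ℝ)| := by
    rw [← Int.cast_abs]; exact_mod_cast hR
  have hR0 : (R : ℝ) ≠ 0 := by
    intro h; rw [h] at hRr; simp at hRr; linarith
  obtain ⟨M, hM, hbd⟩ := ZP.ae_abs_bound hR hμ h0
  have hfin := ZP.Zs_finite (μ := μ) hM hbd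
  have hstep : ∀ x : ℝ, x ∈ ZP.Zs μ → ∃ s : ℤ, s ∈ L ∧
      ((x + (s : ℝ)) / (R : ℝ) ∈ ZP.Zs μ ∧ ZP.mB B ((x + (s : ℝ)) / (R : ℝ)) ≠ 0) := by
    intro x hx
    obtain ⟨ℓ, hℓL, hℓm⟩ := ZP.Zs_succ hH h0 x
    exact ⟨ℓ, hℓL, ZP.Zs_invariant h0 hμ hR0 hx ℓ hℓm, hℓm⟩
  choose sfun hsL hsZm using hstep
  have hsZ : ∀ x hx, (x + ((sfun x hx : ℤ) : ℝ)) / (R : ℝ) ∈ ZP.Zs μ := fun x hx => (hsZm x hx).1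
  -- Part A : no exact level-one points
  have nobad : ∀ ζ : ℝ, ζ ∈ ZP.Zs μ → ∀ e : ℤ,
      (∃ k : ℤ, ζ * (e : ℝ) * (R : ℝ) = (k : ℝ)) → (∃ k : ℤ, ζ * (e : ℝ) = (k : ℝ)) := by
    intro ζ hζ e hk1
    by_contra hk0
    set T : {x : ℝ // x ∈ ZP.Zs μ} → {x : ℝ // x ∈ ZP.Zs μ} :=
      fun p => ⟨(p.1 + ((sfun p.1 p.2 : ℤ) : ℝ)) / (R : ℝ), hsZ p.1 p.2⟩ with hT
    set v : ℕ → {x : ℝ // x ∈ ZP.Zs μ} := fun j => T^[j] ⟨ζ, hζ⟩ with hv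
    have hvs : ∀ j, (v (j + 1)).1
        = ((v j).1 + ((sfun (v j).1 (v j).2 : ℤ) : ℝ)) / (R : ℝ) := by
      intro j
      show (T^[j + 1] ⟨ζ, hζ⟩).1 = _
      rw [Function.iterate_succ_apply']
    have hlev : ∀ j, (∃ k : ℤ, (v j).1 * (e : ℝ) * (R : ℝ) ^ (j + 1) = (k : ℝ)) ∧
        ¬(∃ k : ℤ, (v j).1 * (e : ℝ) * (R : ℝ) ^ j = (k : ℝ)) := by
      intro j
      induction j with
      | zero =>
        constructor
        · obtain ⟨k, hk⟩ := hk1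
          exact ⟨k, by rw [pow_one]; exact hk⟩
        · intro ⟨k, hk⟩
          exact hk0 ⟨k, by rw [pow_zero, mul_one] at hk; exact hk⟩
      | succ j ih =>
        obtain ⟨⟨k, hk⟩, hnk⟩ := ih
        constructor
        · refine ⟨k + sfun (v j).1 (v j).2 * e * R ^ (j + 1), ?_⟩
          rw [hvs j]
          push_cast
          field_simp
          ring_nf
          ring_nf at hk
          linear_combination (R : ℝ) * hk
        · rintro ⟨k', hk'⟩
          apply hnk
          refine ⟨k' - sfun (v j).1 (v j).2 * e * R ^ j, ?_⟩
          rw [hvs j] at hk'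
          apply mul_left_cancel₀ hR0
          push_cast
          push_cast at hk'
          field_simp at hk'
          linear_combination hk'
    set y : ℕ → ℝ := fun j => Int.fract (v j).1 with hy
    have hyZ : ∀ j, y j ∈ ZP.Zs μ ∩ Set.Icc (0 : ℝ) 1 := fun j =>
      ⟨ZP.Zs_fract (v j).2, ⟨Int.fract_nonneg _, (Int.fract_lt_one _).le⟩⟩
    have hy1 : ∀ j, ∃ k : ℤ, y j * (e : ℝ) * (R : ℝ) ^ (j + 1) = (k : ℝ) := by
      intro j
      obtain ⟨k, hk⟩ := (hlev j).1
      refine ⟨k - ⌊(v j).1⌋ * e * R ^ (j + 1), ?_⟩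
      have : y j = (v j).1 - (⌊(v j).1⌋ : ℝ) := (Int.self_sub_floor _).symm
      rw [this]
      push_cast
      linear_combination hk
    have hy2 : ∀ j, ¬∃ k : ℤ, y j * (e : ℝ) * (R : ℝ) ^ j = (k : ℝ) := by
      rintro j ⟨k, hk⟩
      apply (hlev j).2
      refine ⟨k + ⌊(v j).1⌋ * e * R ^ j, ?_⟩
      have hyy : y j = (v j).1 - (⌊(v j).1⌋ : ℝ) := (Int.self_sub_floor _).symm
      rw [hyy] at hk
      push_cast
      push_cast at hk
      linear_combination hk
    have key : ∀ a b : ℕ, a < b → y a ≠ y b := by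
      intro a b hab heq
      apply hy2 b
      obtain ⟨k, hk⟩ := hy1 a
      refine ⟨k * R ^ (b - (a + 1)), ?_⟩
      have hbe : (R : ℝ) ^ b = (R : ℝ) ^ (a + 1) * (R : ℝ) ^ (b - (a + 1)) := by
        rw [← pow_add]
        congr 1
        omega
      rw [← heq, hbe]
      push_cast
      calc y a * (e : ℝ) * ((R : ℝ) ^ (a + 1) * (R : ℝ) ^ (b - (a + 1)))
          = (y a * (e : ℝ) * (R : ℝ) ^ (a + 1)) * (R : ℝ) ^ (b - (a + 1)) := by ring
        _ = (k : ℝ) * (R : ℝ) ^ (b - (a + 1)) := by rw [hk]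
    have hyinj : Function.Injective y := by
      intro a b hab
      by_contra hne
      rcases lt_or_gt_of_ne hne with h | h
      · exact key a b h hab
      · exact key b a h hab.symm
    exact (Set.infinite_of_injective_forall_mem hyinj hyZ) hfin
  -- Part B : the cycle
  set S : Set ℝ := ZP.Zs μ ∩ Set.Icc (0 : ℝ) 1 with hS
  haveI : Finite ↥S := hfin.to_subtype
  set Tf : ↥S → ↥S := fun p =>
    ⟨Int.fract ((p.1 + ((sfun p.1 p.2.1 : ℤ) : ℝ)) / (R : ℝ)),
      ⟨ZP.Zs_fract (hsZ p.1 p.2.1), ⟨Int.fract_nonneg _, (Int.fract_lt_one _).le⟩⟩⟩ with hTf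
  set a : ℕ → ↥S := fun n => Tf^[n]
    ⟨Int.fract ξ, ⟨ZP.Zs_fract hξZ, ⟨Int.fract_nonneg _, (Int.fract_lt_one _).le⟩⟩⟩ with haa
  have ha : ∀ n, (a (n + 1)).1
      = Int.fract (((a n).1 + ((sfun (a n).1 (a n).2.1 : ℤ) : ℝ)) / (R : ℝ)) := by
    intro n
    show (Tf^[n + 1] _).1 = _
    rw [Function.iterate_succ_apply']
  have main : ∀ n m : ℕ, n < m → a n = a m → False := by
    intro n m hlt hEq
    set p := m - n with hpdef
    have hp1 : 1 ≤ p := by omega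
    have hiter : ∀ j : ℕ, ∃ c : ℤ, (a (n + j)).1 * (R : ℝ) ^ j = (a n).1 + (c : ℝ) := by
      intro j
      induction j with
      | zero => exact ⟨0, by simp⟩
      | succ j ih =>
        obtain ⟨c, hc⟩ := ih
        refine ⟨c + sfun (a (n + j)).1 (a (n + j)).2.1 * R ^ j
          - ⌊(((a (n + j)).1 + ((sfun (a (n + j)).1 (a (n + j)).2.1 : ℤ) : ℝ)) / (R : ℝ))⌋ * R ^ (j + 1), ?_⟩
        have h1 : a (n + (j + 1)) = a ((n + j) + 1) := rfl
        rw [h1, ha (n + j)]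
        have h2 : Int.fract (((a (n + j)).1 + ((sfun (a (n + j)).1 (a (n + j)).2.1 : ℤ) : ℝ)) / (R : ℝ))
            = (((a (n + j)).1 + ((sfun (a (n + j)).1 (a (n + j)).2.1 : ℤ) : ℝ)) / (R : ℝ))
              - (⌊(((a (n + j)).1 + ((sfun (a (n + j)).1 (a (n + j)).2.1 : ℤ) : ℝ)) / (R : ℝ))⌋ : ℝ) :=
          (Int.self_sub_floor _).symm
        rw [h2]
        push_cast
        field_simp
        ring_nf
        ring_nf at hc
        linear_combination (R : ℝ) * hc
    obtain ⟨c, hc⟩ := hiter p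
    rw [show n + p = m from by omega, ← hEq] at hc
    set w := (a n).1 with hw
    set d : ℤ := R ^ p - 1 with hd
    have hwd : ∃ k : ℤ, w * (d : ℝ) = (k : ℝ) := by
      refine ⟨c, ?_⟩
      rw [hd]
      push_cast
      linear_combination hc
    have hcop : IsCoprime (R : ℤ) d := by
      refine ⟨R ^ (p - 1), -1, ?_⟩
      rw [hd]
      have hpp : R ^ (p - 1) * R = R ^ p := by
        rw [← pow_succ]
        congr 1
        omega
      linear_combination hpp
    have hwZ : w ∈ ZP.Zs μ := (a n).2.1
    have hlev0 : ∀ ℓ ∈ L, ZP.mB B ((w + (ℓ : ℝ)) / (R : ℝ)) ≠ 0 →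
        ∃ k : ℤ, (w + (ℓ : ℝ)) / (R : ℝ) * (d : ℝ) = (k : ℝ) := by
      intro ℓ hℓ hmne
      apply nobad _ (ZP.Zs_invariant h0 hμ hR0 hwZ ℓ hmne) d
      obtain ⟨k, hk⟩ := hwd
      refine ⟨k + ℓ * d, ?_⟩
      push_cast
      field_simp
      linear_combination hk
    obtain ⟨ℓ₀, hℓ₀L, hℓ₀m⟩ := ZP.Zs_succ hH h0 w
    have huniq : ∀ ℓ ∈ L, ZP.mB B ((w + (ℓ : ℝ)) / (R : ℝ)) ≠ 0 → ℓ = ℓ₀ := by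
      intro ℓ hℓ hmne
      obtain ⟨k, hk⟩ := hlev0 ℓ hℓ hmne
      obtain ⟨k0, hk0⟩ := hlev0 ℓ₀ hℓ₀L hℓ₀m
      apply ZP.Lmod hH h0 hR0 ℓ hℓ ℓ₀ hℓ₀L
      have hreal : ((ℓ - ℓ₀ : ℤ) : ℝ) * (d : ℝ) = (R : ℝ) * ((k - k0 : ℤ) : ℝ) := by
        push_cast
        field_simp at hk hk0
        linear_combination hk - hk0
      have hint : (ℓ - ℓ₀) * d = R * (k - k0) := by exact_mod_cast hreal
      exact hcop.dvd_of_dvd_mul_right ⟨k - k0, hint⟩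
    have hq := ZP.Qsum hH h0 w
    rw [Finset.sum_eq_single_of_mem ℓ₀ hℓ₀L (fun ℓ hℓ hne => by
      by_cases hz : ZP.mB B ((w + (ℓ : ℝ)) / (R : ℝ)) = 0
      · rw [hz, zero_mul]
      · exact absurd (huniq ℓ hℓ hz) hne)] at hq
    set t₀ := (w + (ℓ₀ : ℝ)) / (R : ℝ) with ht₀
    have hNC : (B.card : ℂ) ≠ 0 := by exact_mod_cast Nat.cast_ne_zero.mpr hN.ne'
    -- sum of unit vectors with norm N
    have hSS : (∑ b ∈ B, ZP.ev (-((b : ℝ) * t₀)))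
        * (starRingEnd ℂ) (∑ b ∈ B, ZP.ev (-((b : ℝ) * t₀))) = ((B.card : ℂ)) ^ 2 := by
      unfold ZP.mB at hq
      rw [_root_.map_mul, map_inv₀, map_natCast] at hq
      field_simp at hq
      rw [map_sum]
      simp only [mul_comm t₀, map_sum] at hq
      linear_combination hq
    have hprod : (∑ b ∈ B, ZP.ev (-((b : ℝ) * t₀)))
        * (starRingEnd ℂ) (∑ b ∈ B, ZP.ev (-((b : ℝ) * t₀)))
        = ∑ q ∈ B ×ˢ B, ZP.ev (-((q.1 : ℝ) * t₀)) * (starRingEnd ℂ) (ZP.ev (-((q.2 : ℝ) * t₀))) := by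
      rw [map_sum, Finset.sum_mul_sum, Finset.sum_product]
    have hre : ∑ q ∈ B ×ˢ B,
        (ZP.ev (-((q.1 : ℝ) * t₀)) * (starRingEnd ℂ) (ZP.ev (-((q.2 : ℝ) * t₀)))).re
        = (B.card : ℝ) ^ 2 := by
      have h3 := congrArg Complex.re (hprod.symm.trans hSS)
      rw [Complex.re_sum] at h3
      rw [h3]
      rw [show ((B.card : ℂ)) ^ 2 = (((B.card ^ 2 : ℕ)) : ℂ) from by push_cast; ring,
        Complex.natCast_re]
      push_cast
      ring
    have hterm_le : ∀ q ∈ B ×ˢ B,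
        (ZP.ev (-((q.1 : ℝ) * t₀)) * (starRingEnd ℂ) (ZP.ev (-((q.2 : ℝ) * t₀)))).re ≤ 1 := by
      intro q _
      calc (ZP.ev (-((q.1 : ℝ) * t₀)) * (starRingEnd ℂ) (ZP.ev (-((q.2 : ℝ) * t₀)))).re
          ≤ ‖ZP.ev (-((q.1 : ℝ) * t₀)) * (starRingEnd ℂ) (ZP.ev (-((q.2 : ℝ) * t₀)))‖ :=
            Complex.re_le_norm _
        _ = 1 := by
            rw [norm_mul, ZP.ev_norm, Complex.norm_conj, ZP.ev_norm, mul_one]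
    have hall : ∀ q ∈ B ×ˢ B,
        (ZP.ev (-((q.1 : ℝ) * t₀)) * (starRingEnd ℂ) (ZP.ev (-((q.2 : ℝ) * t₀)))).re = 1 := by
      by_contra hcon2
      push_neg at hcon2
      obtain ⟨q0, hq0, hq0ne⟩ := hcon2
      have hlt : ∑ q ∈ B ×ˢ B,
          (ZP.ev (-((q.1 : ℝ) * t₀)) * (starRingEnd ℂ) (ZP.ev (-((q.2 : ℝ) * t₀)))).re
          < ∑ _q ∈ B ×ˢ B, (1 : ℝ) :=
        Finset.sum_lt_sum hterm_le ⟨q0, hq0, lt_of_le_of_ne (hterm_le q0 hq0) hq0ne⟩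
      rw [hre, Finset.sum_const, Finset.card_product, nsmul_eq_mul, mul_one] at hlt
      push_cast at hlt
      nlinarith
    have hb1 : ∀ b ∈ B, ∃ n' : ℤ, (b : ℝ) * t₀ = (n' : ℝ) := by
      intro b hb
      have hp2 := hall (b, 0) (Finset.mem_product.mpr ⟨hb, h0⟩)
      simp only [Int.cast_zero, zero_mul, neg_zero, ZP.ev_zero, _root_.map_one, mul_one] at hp2
      have hz1 : ZP.ev (-((b : ℝ) * t₀)) = 1 :=
        ZP.abs_one_re_one (ZP.ev_norm _) hp2
      obtain ⟨n', hn'⟩ := (ZP.ev_eq_one_iff _).mp hz1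
      exact ⟨-n', by push_cast; linarith⟩
    obtain ⟨n₀, hn₀⟩ := ZP.gcd_comb B t₀ hb1
    rw [hgcd] at hn₀
    have ht0i : t₀ = (n₀ : ℝ) := by simpa using hn₀
    have hwint : w = ((R * n₀ - ℓ₀ : ℤ) : ℝ) := by
      rw [ht₀] at ht0i
      push_cast
      field_simp at ht0i
      linarith
    exact ZP.Zs_not_int (μ := μ) (R * n₀ - ℓ₀) (hwint ▸ hwZ)
  obtain ⟨n, m, hnm, hEq⟩ := Finite.exists_ne_map_eq_of_infinite a
  rcases lt_or_gt_of_ne hnm with h | h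
  · exact main n m h hEq
  · exact main m n h hEq.symm
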